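/- Let M ∈ ℝ^{m×n} and S ∈ ℝ^{d×m} with rank(SM) = rank(M) = k. Let the sketch SM have a decomposition SM = Q̂ R̂ with Q̂ ∈ ℝ^{d×k} of orthonormal columns and R̂ ∈ ℝ^{k×n}, and suppose A := R̂[:, 1:k] (the leading k×k block) is invertible. Define the preconditioned matrix Mᵖ := M[:, 1:k] A⁻¹. Then M = Mᵖ R̂, i.e., the truncated preconditioned factorization exactly reconstructs M. -/

import Mathlib

open Matrix BigOperators

theorem Matrix.isHermitian_transpose_mul_self {m n α : Type*} [CommSemiring α] [StarRing α]
    [TrivialStar α] [Fintype m] (A : Matrix m n α) : (Aᵀ * A).IsHermitian := by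
  rw [IsHermitian, conjTranspose_eq_transpose_of_trivial, transpose_mul, transpose_transpose]

noncomputable def sval {m n : ℕ} (A : Matrix (Fin m) (Fin n) ℝ) (j : Fin n) : ℝ :=
  Real.sqrt ((Matrix.isHermitian_transpose_mul_self A).eigenvalues
    (Tuple.sort (Matrix.isHermitian_transpose_mul_self A).eigenvalues j.rev))

noncomputable def specNorm {m n : ℕ} (A : Matrix (Fin m) (Fin n) ℝ) : ℝ :=
  sSup (Set.range (sval A))

noncomputable def sMin {m n : ℕ} (A : Matrix (Fin m) (Fin n) ℝ) : ℝ :=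
  sInf (Set.range (sval A))

noncomputable def frob {m n : ℕ} (A : Matrix (Fin m) (Fin n) ℝ) : ℝ :=
  Real.sqrt (∑ i, ∑ j, (A i j)^2)

noncomputable def enorm {m : ℕ} (x : Fin m → ℝ) : ℝ := Real.sqrt (∑ i, (x i)^2)

def UpperTri {k n : ℕ} (R : Matrix (Fin k) (Fin n) ℝ) : Prop :=
  ∀ (i : Fin k) (j : Fin n), (j : ℕ) < (i : ℕ) → R i j = 0

def lead {k n : ℕ} (R : Matrix (Fin k) (Fin n) ℝ) (ℓ : ℕ) (h1 : ℓ ≤ k) (h2 : ℓ ≤ n) :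
    Matrix (Fin ℓ) (Fin ℓ) ℝ := fun i j => R (Fin.castLE h1 i) (Fin.castLE h2 j)

def topRight {k n : ℕ} (R : Matrix (Fin k) (Fin n) ℝ) (ℓ : ℕ) (h1 : ℓ ≤ k) :
    Matrix (Fin ℓ) (Fin (n - ℓ)) ℝ :=
  fun i j => R (Fin.castLE h1 i) ⟨ℓ + j.1, by have := j.isLt; omega⟩

def trail {k n : ℕ} (R : Matrix (Fin k) (Fin n) ℝ) (ℓ : ℕ) :
    Matrix (Fin (k - ℓ)) (Fin (n - ℓ)) ℝ :=
  fun i j => R ⟨ℓ + i.1, by have := i.isLt; omega⟩ ⟨ℓ + j.1, by have := j.isLt; omega⟩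

lemma mulVec_cancel_of_rank_eq {m n d : ℕ}
    (M : Matrix (Fin m) (Fin n) ℝ) (S : Matrix (Fin d) (Fin m) ℝ)
    (hrank : (S * M).rank = M.rank) (x : Fin n → ℝ)
    (h : (S * M) *ᵥ x = 0) : M *ᵥ x = 0 := by
  classical
  set f := M.mulVecLin with hf
  set g := S.mulVecLin with hg
  let g' : LinearMap.range f →ₗ[ℝ] (Fin d → ℝ) := g.comp (LinearMap.range f).subtype
  have hrange : LinearMap.range g' = LinearMap.range ((S * M).mulVecLin) := by
    rw [Matrix.mulVecLin_mul, LinearMap.range_comp, LinearMap.range_comp,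
      Submodule.range_subtype]
  have h1 : Module.finrank ℝ (LinearMap.range g')
      = Module.finrank ℝ (LinearMap.range f) := by
    rw [hrange]; exact hrank
  have h2 := g'.finrank_range_add_finrank_ker
  have h3 : Module.finrank ℝ (LinearMap.ker g') = 0 := by omega
  have hker : LinearMap.ker g' = ⊥ := Submodule.finrank_eq_zero.mp h3
  have hinj := LinearMap.ker_eq_bot.mp hker
  have hmem : M *ᵥ x ∈ LinearMap.range f := ⟨x, rfl⟩
  have hz : g' ⟨M *ᵥ x, hmem⟩ = 0 := by
    show S *ᵥ (M *ᵥ x) = 0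
    rw [Matrix.mulVec_mulVec, h]
  have := hinj (a₁ := ⟨M *ᵥ x, hmem⟩) (a₂ := 0) (by simpa using hz)
  exact congrArg Subtype.val this

theorem cqrrpt_exact_correctness {m n d k : ℕ} (hkn : k ≤ n)
    (M : Matrix (Fin m) (Fin n) ℝ) (S : Matrix (Fin d) (Fin m) ℝ)
    (hrank : (S * M).rank = M.rank) (hk : M.rank = k)
    (Q : Matrix (Fin d) (Fin k) ℝ) (R : Matrix (Fin k) (Fin n) ℝ)
    (hdecomp : S * M = Q * R) (hQ : Qᵀ * Q = 1)
    (hA : IsUnit (R.submatrix id (Fin.castLE hkn)).det) :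
    M = (M.submatrix id (Fin.castLE hkn) * (R.submatrix id (Fin.castLE hkn))⁻¹) * R := by
  classical
  set A := R.submatrix id (Fin.castLE hkn) with hAdef
  set P : Matrix (Fin n) (Fin k) ℝ := fun i j => if (i : ℕ) = (j : ℕ) then 1 else 0 with hP
  have hmulP : ∀ {a : ℕ} (N : Matrix (Fin a) (Fin n) ℝ),
      N * P = N.submatrix id (Fin.castLE hkn) := by
    intro a N
    ext i j
    rw [Matrix.mul_apply]
    rw [Finset.sum_eq_single (Fin.castLE hkn j)]
    · simp [hP]
    · intro b _ hb
      have : ¬ ((b : ℕ) = (j : ℕ)) := by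
        intro hc; apply hb; ext; simpa using hc
      simp [hP, this]
    · simp
  set X : Matrix (Fin n) (Fin n) ℝ := 1 - P * A⁻¹ * R with hX
  have hSMX : S * M * X = 0 := by
    have hRP : R * P = A := hmulP R
    have : S * M * (P * A⁻¹ * R) = S * M := by
      rw [hdecomp]
      calc Q * R * (P * A⁻¹ * R) = Q * (R * P) * A⁻¹ * R := by
            simp only [Matrix.mul_assoc]
        _ = Q * R := by
            rw [hRP, Matrix.mul_assoc Q A, Matrix.mul_nonsing_inv A hA, Matrix.mul_one]
    rw [hX, Matrix.mul_sub, Matrix.mul_one, this, sub_self]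
  have hMX : M * X = 0 := by
    ext i j
    have hx : (S * M) *ᵥ (X *ᵥ Pi.single j 1) = 0 := by
      rw [Matrix.mulVec_mulVec, hSMX, Matrix.zero_mulVec]
    have hMx := mulVec_cancel_of_rank_eq M S hrank _ hx
    rw [Matrix.mulVec_mulVec] at hMx
    have := congrFun hMx i
    simpa [Matrix.mulVec_single] using this
  have : M * (P * A⁻¹ * R) = M := by
    have h0 : M * X = M - M * (P * A⁻¹ * R) := by
      rw [hX, Matrix.mul_sub, Matrix.mul_one]
    rw [h0] at hMX
    exact (sub_eq_zero.mp hMX).symm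
  calc M = M * (P * A⁻¹ * R) := this.symm
    _ = (M * P) * A⁻¹ * R := by simp only [Matrix.mul_assoc]
    _ = (M.submatrix id (Fin.castLE hkn) * A⁻¹) * R := by rw [hmulP M]
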